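/- A flat Lie algebra (in the sense of Milnor) is unimodular: for every x in g, the trace of ad_x is zero. -/

import Mathlib

/-- A flat Lie algebra (finite-dimensional real Lie algebra with a
positive-definite inner product whose Levi-Civita product, given by the Koszul formula,
has vanishing curvature) is unimodular: `tr (ad x) = 0` for every `x`. -/
theorem stmt_5 {L : Type*} [LieRing L] [LieAlgebra ℝ L] [Module.Finite ℝ L]
    (B : L →ₗ[ℝ] L →ₗ[ℝ] ℝ)
    (hsymm : ∀ x y : L, B x y = B y x)
    (hpos : ∀ x : L, x ≠ 0 → 0 < B x x)
    (nabla : L →ₗ[ℝ] L →ₗ[ℝ] L)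
    (hKoszul : ∀ x y z : L,
      2 * B (nabla x y) z = B ⁅x, y⁆ z + B ⁅z, x⁆ y + B ⁅z, y⁆ x)
    (hflat : ∀ x y z : L, nabla ⁅x, y⁆ z = nabla x (nabla y z) - nabla y (nabla x z)) :
    ∀ x : L, LinearMap.trace ℝ L (LieAlgebra.ad ℝ L x) = 0 := by
  classical
  set T := LinearMap.trace ℝ L with hTdef
  have hzero : ∀ v : L, B v v = 0 → v = 0 := by
    intro v hv
    by_contra h
    exact absurd hv (ne_of_gt (hpos v h))
  have hnonneg : ∀ v : L, 0 ≤ B v v := by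
    intro v
    by_cases hv : v = 0
    · simp [hv]
    · exact le_of_lt (hpos v hv)
  -- skew-symmetry of each nabla x
  have hskew : ∀ x y z : L, B (nabla x y) z = - B y (nabla x z) := by
    intro x y z
    have h1 := hKoszul x y z
    have h2 := hKoszul x z y
    have e1 : B ⁅z, x⁆ y = - B ⁅x, z⁆ y := by
      rw [neg_eq_iff_eq_neg.mp (lie_skew x z), map_neg, LinearMap.neg_apply]
    have e2 : B ⁅z, y⁆ x = - B ⁅y, z⁆ x := by
      rw [neg_eq_iff_eq_neg.mp (lie_skew y z), map_neg, LinearMap.neg_apply]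
    have e3 : B ⁅y, x⁆ z = - B ⁅x, y⁆ z := by
      rw [neg_eq_iff_eq_neg.mp (lie_skew x y), map_neg, LinearMap.neg_apply]
    have e5 : B y (nabla x z) = B (nabla x z) y := hsymm _ _
    linarith
  -- torsion-freeness
  have htor : ∀ x y : L, nabla x y - nabla y x = ⁅x, y⁆ := by
    intro x y
    have key : B (nabla x y - nabla y x - ⁅x, y⁆) (nabla x y - nabla y x - ⁅x, y⁆) = 0 := by
      set w := nabla x y - nabla y x - ⁅x, y⁆ with hw
      have hz : ∀ z : L, B w z = 0 := by
        intro z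
        have h1 := hKoszul x y z
        have h2 := hKoszul y x z
        have e3 : B ⁅y, x⁆ z = - B ⁅x, y⁆ z := by
          rw [neg_eq_iff_eq_neg.mp (lie_skew x y), map_neg, LinearMap.neg_apply]
        have expand : B w z = B (nabla x y) z - B (nabla y x) z - B ⁅x, y⁆ z := by
          rw [hw]; simp [map_sub]
        rw [expand]; linarith
      exact hz w
    exact sub_eq_zero.mp (hzero _ key)
  -- ad x = nabla x - nabla.flip x  (as endomorphisms)
  have hadL : ∀ x : L, (LieAlgebra.ad ℝ L x : Module.End ℝ L) = nabla x - nabla.flip x := by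
    intro x
    ext z
    simp only [LieAlgebra.ad_apply, LinearMap.sub_apply, LinearMap.flip_apply]
    exact (htor x z).symm
  -- an orthonormal basis for B
  haveI : Invertible (2 : ℝ) := invertibleOfNonzero two_ne_zero
  have hBsymm : B.IsSymm := ⟨fun x y => hsymm x y⟩
  obtain ⟨v, hv⟩ := LinearMap.BilinForm.exists_orthogonal_basis hBsymm
  have hvpos : ∀ i, 0 < B (v i) (v i) := fun i => hpos _ (v.ne_zero i)
  set c : Fin (Module.finrank ℝ L) → ℝ := fun i => Real.sqrt (B (v i) (v i)) with hc
  have hcpos : ∀ i, 0 < c i := fun i => Real.sqrt_pos.mpr (hvpos i)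
  have hcu : ∀ i, IsUnit ((c i)⁻¹) :=
    fun i => isUnit_iff_ne_zero.mpr (inv_ne_zero (ne_of_gt (hcpos i)))
  set e := v.isUnitSMul hcu with he
  have heapp : ∀ i, e i = (c i)⁻¹ • v i := fun i => Module.Basis.isUnitSMul_apply hcu i
  have horth : ∀ i j, B (e i) (e j) = if i = j then 1 else 0 := by
    intro i j
    have hred : B (e i) (e j) = (c i)⁻¹ * (c j)⁻¹ * B (v i) (v j) := by
      rw [heapp, heapp]
      simp only [map_smul, LinearMap.smul_apply, smul_eq_mul]
      ring
    rw [hred]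
    by_cases hij : i = j
    · subst hij
      rw [if_pos rfl, hc]
      have h1 : Real.sqrt (B (v i) (v i)) * Real.sqrt (B (v i) (v i)) = B (v i) (v i) :=
        Real.mul_self_sqrt (le_of_lt (hvpos i))
      have h2 : Real.sqrt (B (v i) (v i)) > 0 := Real.sqrt_pos.mpr (hvpos i)
      field_simp
      nlinarith [hvpos i]
    · rw [if_neg hij, LinearMap.isOrthoᵢ_def.mp hv i j hij]
      simp
  -- trace via the orthonormal basis
  have htr : ∀ f : Module.End ℝ L, T f = ∑ i, B (f (e i)) (e i) := by
    have hrepr : ∀ (w : L) i, B w (e i) = e.repr w i := by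
      intro w i
      conv_lhs => rw [← e.sum_repr w]
      rw [map_sum, LinearMap.sum_apply]
      simp only [map_smul, LinearMap.smul_apply, smul_eq_mul, horth]
      simp [Finset.sum_ite_eq']
    intro f
    rw [hTdef, LinearMap.trace_eq_matrix_trace ℝ e f, Matrix.trace]
    simp only [Matrix.diag, LinearMap.toMatrix_apply]
    exact Finset.sum_congr rfl fun i _ => (hrepr (f (e i)) i).symm
  -- trace of skew operators vanishes
  have htrnabla : ∀ x : L, T (nabla x) = 0 := by
    intro x
    have hterm : ∀ i, B (nabla x (e i)) (e i) = 0 := by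
      intro i
      have h1 := hskew x (e i) (e i)
      have h2 := hsymm (e i) (nabla x (e i))
      linarith
    rw [htr]
    exact Finset.sum_eq_zero fun i _ => hterm i
  -- trace of right multiplication
  have hRtr : ∀ x : L, T (nabla.flip x) = - T (LieAlgebra.ad ℝ L x) := by
    intro x
    have : (nabla.flip x : Module.End ℝ L) = nabla x - LieAlgebra.ad ℝ L x := by
      rw [hadL x]; abel
    rw [this, map_sub, htrnabla]
    ring
  -- key flatness trace identity
  have hstar : ∀ x y : L,
      T (LieAlgebra.ad ℝ L (nabla x y)) = - T (nabla.flip y * nabla.flip x) := by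
    intro x y
    have hop : (nabla.flip y) * (LieAlgebra.ad ℝ L x)
        = nabla x * nabla.flip y - nabla.flip (nabla x y) := by
      ext z
      simp only [Module.End.mul_apply, LinearMap.sub_apply, LinearMap.flip_apply,
        LieAlgebra.ad_apply]
      exact hflat x z y
    have h1 : T ((nabla.flip y) * (LieAlgebra.ad ℝ L x))
        = T (nabla x * nabla.flip y) - T (nabla.flip (nabla x y)) := by
      rw [hop, map_sub]
    have h2 : (nabla.flip y) * (LieAlgebra.ad ℝ L x)
        = nabla.flip y * nabla x - nabla.flip y * nabla.flip x := by
      rw [hadL x, mul_sub]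
    have h3 : T (nabla.flip y * nabla x) = T (nabla x * nabla.flip y) :=
      LinearMap.trace_mul_comm ℝ _ _
    have h4 := hRtr (nabla x y)
    rw [h2, map_sub, h3] at h1
    linarith
  -- Riesz vector for the trace form
  have hnd : LinearMap.BilinForm.Nondegenerate B := by
    exact ⟨fun m hm => hzero m (hm m), fun m hm => hzero m (hm m)⟩
  obtain ⟨H, hH⟩ := (LinearMap.BilinForm.toDual B hnd).surjective
    ({ toFun := fun w => T (LieAlgebra.ad ℝ L w),
        map_add' := fun a b => by rw [hadL, hadL, hadL]; simp; ring,
        map_smul' := fun r a => by rw [hadL, hadL]; simp; ring } : L →ₗ[ℝ] ℝ)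
  have hHw : ∀ w : L, B H w = T (LieAlgebra.ad ℝ L w) := by
    intro w
    have := congrArg (fun f => f w) hH
    simpa [LinearMap.BilinForm.toDual_def] using this
  -- the operator  z ↦ nabla z H  is self-adjoint with square trace zero
  have hstar2 : ∀ x y : L, B (nabla x H) y = T (nabla.flip y * nabla.flip x) := by
    intro x y
    have h1 := hHw (nabla x y)
    have h2 := hstar x y
    have h3 : B H (nabla x y) = - B (nabla x H) y := by
      rw [hsymm H (nabla x y)]
      rw [hskew x y H]
      rw [hsymm y (nabla x H)]
    rw [h3] at h1
    linarith
  have hsa : ∀ x y : L, B (nabla x H) y = B (nabla y H) x := by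
    intro x y
    rw [hstar2, hstar2, LinearMap.trace_mul_comm]
  have hsq0 : T (nabla.flip H * nabla.flip H) = 0 := by
    have h1 := hstar2 H H
    have h2 : B (nabla H H) H = - B (nabla H H) H := by
      have := hskew H H H
      rw [hsymm H (nabla H H)] at this
      linarith
    linarith
  -- conclude nabla (e i) H = 0 for each i
  have hterm : ∀ i, B ((nabla.flip H * nabla.flip H) (e i)) (e i)
      = B (nabla (e i) H) (nabla (e i) H) := by
    intro i
    have : (nabla.flip H * nabla.flip H) (e i) = nabla (nabla (e i) H) H := by
      simp [Module.End.mul_apply, LinearMap.flip_apply]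
    rw [this, hsa (nabla (e i) H) (e i)]
  have hsum : ∑ i, B (nabla (e i) H) (nabla (e i) H) = 0 := by
    rw [← Finset.sum_congr rfl fun i _ => hterm i, ← htr, hsq0]
  have hwi : ∀ i, nabla (e i) H = 0 := by
    intro i
    have := (Finset.sum_eq_zero_iff_of_nonneg
      (fun j _ => hnonneg (nabla (e j) H))).mp hsum i (Finset.mem_univ i)
    exact hzero _ this
  -- hence tr(ad H) = 0, so B H H = 0, so H = 0
  have hflipH : T (nabla.flip H) = 0 := by
    rw [htr]
    refine Finset.sum_eq_zero fun i _ => ?_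
    simp [LinearMap.flip_apply, hwi i]
  have hadH : T (LieAlgebra.ad ℝ L H) = 0 := by
    have := hRtr H
    linarith
  have hH0 : H = 0 := by
    apply hzero
    rw [hHw H]
    exact hadH
  intro x
  rw [← hHw x, hH0]
  simp
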